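/- Let T be an arbitrary triangle cut by the segment [D,E] as in the setup, and let w : ℝ² → ℝ be defined by w(x) = max(⟨n, x − D⟩, 0), so that w equals ⟨n, x − D⟩ on T⁺ and 0 on T⁻. Let L = π w be the Crouzeix–Raviart interpolant of w on T. Then ⟨∇L, n⟩ = |T⁺| / |T|, the area fraction of the subtriangle T⁺, where ∇L ∈ ℝ² is the constant gradient of the affine map L. -/
import Mathlib


open MeasureTheory

noncomputable section

namespace StokesIFE

/-- Euclidean inner product on `ℝ²`. -/
def dot (x y : Fin 2 → ℝ) : ℝ := x 0 * y 0 + x 1 * y 1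

/-- Euclidean length of a vector of `ℝ²`. -/
def len (x : Fin 2 → ℝ) : ℝ := Real.sqrt (dot x x)

/-- Strain tensor `ε(A) = (A + Aᵀ)/2`. -/
def eps (A : Matrix (Fin 2) (Fin 2) ℝ) : Matrix (Fin 2) (Fin 2) ℝ :=
  (2⁻¹ : ℝ) • (A + A.transpose)

/-- Cauchy stress tensor `σ(μ, A, q) = 2 μ ε(A) − q I₂`. -/
def sig (μ : ℝ) (A : Matrix (Fin 2) (Fin 2) ℝ) (q : ℝ) : Matrix (Fin 2) (Fin 2) ℝ :=
  (2 * μ) • eps A - q • (1 : Matrix (Fin 2) (Fin 2) ℝ)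

/-- Mean value of `u` over the segment `[P, Q]` with respect to arclength,
expressed through the affine parametrization of the segment. -/
def edgeMean (P Q : Fin 2 → ℝ) (u : (Fin 2 → ℝ) → ℝ) : ℝ :=
  ∫ s in (0:ℝ)..1, u (P + s • (Q - P))

/-- Two-dimensional Lebesgue area of a subset of `ℝ²`. -/
def area (s : Set (Fin 2 → ℝ)) : ℝ := (volume s).toReal

/-- Squared Frobenius norm of a 2×2 matrix. -/
def frobSq (A : Matrix (Fin 2) (Fin 2) ℝ) : ℝ := ∑ i : Fin 2, ∑ j : Fin 2, (A i j) ^ 2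

/-- A triangle `T = conv{A₁, A₂, A₃}` cut by the segment `[D, E]`, where
`D` lies in the open edge `(A₂, A₃)`, `E` lies in the open edge `(A₁, A₃)`,
and `n` is the unit normal of `E − D` pointing towards `A₃`. -/
structure CutTriangle where
  A₁ : Fin 2 → ℝ
  A₂ : Fin 2 → ℝ
  A₃ : Fin 2 → ℝ
  D : Fin 2 → ℝ
  E : Fin 2 → ℝ
  n : Fin 2 → ℝ
  indep : AffineIndependent ℝ ![A₁, A₂, A₃]
  hD : D ∈ openSegment ℝ A₂ A₃
  hE : E ∈ openSegment ℝ A₁ A₃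
  hn_unit : dot n n = 1
  hn_orth : dot n (E - D) = 0
  hn_sign : 0 < dot n (A₃ - D)

namespace CutTriangle

variable (c : CutTriangle)

/-- Tangent vector `t = (n₂, −n₁)`, the rotation of `n` by `−π/2`. -/
def t : Fin 2 → ℝ := ![c.n 1, -(c.n 0)]

/-- The closed triangle. -/
def T : Set (Fin 2 → ℝ) := convexHull ℝ {c.A₁, c.A₂, c.A₃}

/-- The part of the triangle on the `+` side of the cut. -/
def Tplus : Set (Fin 2 → ℝ) := c.T ∩ {x | 0 ≤ dot c.n (x - c.D)}

/-- The part of the triangle on the `−` side of the cut. -/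
def Tminus : Set (Fin 2 → ℝ) := c.T ∩ {x | dot c.n (x - c.D) ≤ 0}

/-- The piecewise linear function `w(x) = max(⟨n, x − D⟩, 0)`. -/
def w (x : Fin 2 → ℝ) : ℝ := max (dot c.n (x - c.D)) 0

/-- `(g, b)` represents the Crouzeix–Raviart interpolant `x ↦ ⟨g, x⟩ + b` of `u` on `T`:
an affine map whose mean value over each of the three edges coincides with that of `u`. -/
def IsCR (u : (Fin 2 → ℝ) → ℝ) (g : Fin 2 → ℝ) (b : ℝ) : Prop :=
  edgeMean c.A₂ c.A₃ (fun x => dot g x + b) = edgeMean c.A₂ c.A₃ u ∧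
  edgeMean c.A₁ c.A₃ (fun x => dot g x + b) = edgeMean c.A₁ c.A₃ u ∧
  edgeMean c.A₁ c.A₂ (fun x => dot g x + b) = edgeMean c.A₁ c.A₂ u

/-- The componentwise Crouzeix–Raviart interpolant `x ↦ Mπ x + bπ` of a vector-valued `u`. -/
def IsCRvec (u : (Fin 2 → ℝ) → Fin 2 → ℝ) (Mπ : Matrix (Fin 2) (Fin 2) ℝ)
    (bπ : Fin 2 → ℝ) : Prop :=
  ∀ j : Fin 2, c.IsCR (fun x => u x j) (Mπ j) (bπ j)

/-- The piecewise velocity: `x ↦ Mp x + bp` on the `+` side and `x ↦ Mm x + bm`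
on the `−` side. -/
def vtilde (Mp : Matrix (Fin 2) (Fin 2) ℝ) (bp : Fin 2 → ℝ)
    (Mm : Matrix (Fin 2) (Fin 2) ℝ) (bm : Fin 2 → ℝ) (x : Fin 2 → ℝ) : Fin 2 → ℝ :=
  if 0 ≤ dot c.n (x - c.D) then Mp.mulVec x + bp else Mm.mulVec x + bm

/-- The seven local degrees of freedom: edge means of the two velocity components over
the edges `e₁ = [A₂,A₃]`, `e₂ = [A₁,A₃]`, `e₃ = [A₁,A₂]`, and the mean of the
piecewise-constant pressure over `T`. -/
def dof (Mp : Matrix (Fin 2) (Fin 2) ℝ) (bp : Fin 2 → ℝ)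
    (Mm : Matrix (Fin 2) (Fin 2) ℝ) (bm : Fin 2 → ℝ) (qp qm : ℝ) : Fin 7 → ℝ :=
  ![edgeMean c.A₂ c.A₃ (fun x => c.vtilde Mp bp Mm bm x 0),
    edgeMean c.A₁ c.A₃ (fun x => c.vtilde Mp bp Mm bm x 0),
    edgeMean c.A₁ c.A₂ (fun x => c.vtilde Mp bp Mm bm x 0),
    edgeMean c.A₂ c.A₃ (fun x => c.vtilde Mp bp Mm bm x 1),
    edgeMean c.A₁ c.A₃ (fun x => c.vtilde Mp bp Mm bm x 1),
    edgeMean c.A₁ c.A₂ (fun x => c.vtilde Mp bp Mm bm x 1),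
    (area c.Tplus * qp + area c.Tminus * qm) / area c.T]

/-- A local IFE pair: affine velocities `v± = Mp/Mm · x + bp/bm` and constant pressures
`q±` satisfying the stress-jump condition (J1), continuity of the velocity on `[D,E]` (J2)
and continuity of the divergence (J3). -/
def IsIFEPair (μp μm : ℝ) (Mp : Matrix (Fin 2) (Fin 2) ℝ) (bp : Fin 2 → ℝ)
    (Mm : Matrix (Fin 2) (Fin 2) ℝ) (bm : Fin 2 → ℝ) (qp qm : ℝ) : Prop :=
  (sig μp Mp qp).mulVec c.n = (sig μm Mm qm).mulVec c.n ∧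
  (∀ x ∈ segment ℝ c.D c.E, Mp.mulVec x + bp = Mm.mulVec x + bm) ∧
  Mp.trace = Mm.trace

/-- The diameter of the triangle (its longest edge). -/
def hT : ℝ := max (len (c.A₂ - c.A₁)) (max (len (c.A₃ - c.A₁)) (len (c.A₃ - c.A₂)))

/-- The perimeter of the triangle. -/
def perim : ℝ := len (c.A₂ - c.A₁) + len (c.A₃ - c.A₁) + len (c.A₃ - c.A₂)

/-- The inradius of the triangle, `r_T = 2|T| / perimeter`. -/
def rT : ℝ := 2 * area c.T / c.perim

/-- `ϱ`-shape-regularity: `h_T ≤ ϱ r_T`. -/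
def ShapeReg (ϱ : ℝ) : Prop := c.hT ≤ ϱ * c.rT

/-- Arclength of the part of the edge `[P,Q]` lying on the `+` side of the cut. -/
def edgeLenPlus (P Q : Fin 2 → ℝ) : ℝ :=
  len (Q - P) *
    (volume {s : ℝ | s ∈ Set.Icc (0:ℝ) 1 ∧ 0 ≤ dot c.n (P + s • (Q - P) - c.D)}).toReal

/-- Arclength of the part of the edge `[P,Q]` lying on the `−` side of the cut. -/
def edgeLenMinus (P Q : Fin 2 → ℝ) : ℝ :=
  len (Q - P) *
    (volume {s : ℝ | s ∈ Set.Icc (0:ℝ) 1 ∧ dot c.n (P + s • (Q - P) - c.D) ≤ 0}).toReal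

/-- Total arclength of `∂T ∩ T⁺`. -/
def bdryLenPlus : ℝ :=
  c.edgeLenPlus c.A₂ c.A₃ + c.edgeLenPlus c.A₁ c.A₃ + c.edgeLenPlus c.A₁ c.A₂

/-- Total arclength of `∂T ∩ T⁻`. -/
def bdryLenMinus : ℝ :=
  c.edgeLenMinus c.A₂ c.A₃ + c.edgeLenMinus c.A₁ c.A₃ + c.edgeLenMinus c.A₁ c.A₂

end CutTriangle

lemma dot_add_right (x y z : Fin 2 → ℝ) : dot x (y + z) = dot x y + dot x z := by
  simp [dot]; ring

lemma dot_sub_right (x y z : Fin 2 → ℝ) : dot x (y - z) = dot x y - dot x z := by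
  simp [dot]; ring

lemma dot_smul_right (r : ℝ) (x y : Fin 2 → ℝ) : dot x (r • y) = r * dot x y := by
  simp [dot]; ring

lemma dot_zero_right (x : Fin 2 → ℝ) : dot x 0 = 0 := by simp [dot]

lemma integral_linear (c₁ c₂ : ℝ) : ∫ s in (0:ℝ)..1, (c₁ + c₂ * s) = c₁ + c₂ / 2 := by
  rw [intervalIntegral.integral_add intervalIntegrable_const
    ((by exact (continuous_const.mul continuous_id).intervalIntegrable 0 1 :
      IntervalIntegrable (fun s : ℝ => c₂ * s) volume 0 1))]
  rw [intervalIntegral.integral_const_mul, integral_id, intervalIntegral.integral_const]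
  simp only [smul_eq_mul]
  ring

lemma integral_max_nonpos {a b : ℝ} (ha : a ≤ 0) (hb : b ≤ 0) :
    ∫ s in (0:ℝ)..1, max (a + s * (b - a)) 0 = 0 := by
  rw [intervalIntegral.integral_congr (g := fun _ => (0:ℝ))]
  · simp
  · intro s hs
    rw [Set.uIcc_of_le (by norm_num : (0:ℝ) ≤ 1)] at hs
    have h1 : a + s * (b - a) ≤ 0 := by nlinarith [hs.1, hs.2]
    simp [max_eq_right h1]

lemma integral_max_cross {a c k : ℝ} (ha : a < 0) (hc : 0 < c) (hk : k * (c - a) = c) :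
    ∫ s in (0:ℝ)..1, max (a + s * (c - a)) 0 = k * c / 2 := by
  have hca : 0 < c - a := by linarith
  set s₀ : ℝ := -a / (c - a) with hs₀def
  have hs₀pos : 0 < s₀ := div_pos (by linarith) hca
  have hs₀lt : s₀ < 1 := by rw [div_lt_one hca]; linarith
  have hs₀val : s₀ * (c - a) = -a := div_mul_cancel₀ _ hca.ne'
  have hcont : Continuous fun s : ℝ => max (a + s * (c - a)) 0 :=
    (continuous_const.add (continuous_id.mul continuous_const)).max continuous_const
  have hsplit := intervalIntegral.integral_add_adjacent_intervals
    (a := (0:ℝ)) (b := s₀) (c := 1) (f := fun s : ℝ => max (a + s * (c - a)) 0) (μ := volume)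
    (hcont.intervalIntegrable _ _) (hcont.intervalIntegrable _ _)
  have h1 : ∫ s in (0:ℝ)..s₀, max (a + s * (c - a)) 0 = 0 := by
    rw [intervalIntegral.integral_congr (g := fun _ => (0:ℝ))]
    · simp
    · intro s hs
      rw [Set.uIcc_of_le hs₀pos.le] at hs
      have : a + s * (c - a) ≤ 0 := by nlinarith [hs.1, hs.2]
      simp [max_eq_right this]
  have h2 : ∫ s in s₀..(1:ℝ), max (a + s * (c - a)) 0
      = ∫ s in s₀..(1:ℝ), (a + (c - a) * s) := by
    apply intervalIntegral.integral_congr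
    intro s hs
    rw [Set.uIcc_of_le hs₀lt.le] at hs
    have : 0 ≤ a + s * (c - a) := by nlinarith [hs.1, hs.2]
    simp only [max_eq_left this]; ring
  have h3 : ∫ s in s₀..(1:ℝ), (a + (c - a) * s)
      = a * (1 - s₀) + (c - a) * ((1 - s₀ ^ 2) / 2) := by
    rw [intervalIntegral.integral_add intervalIntegrable_const
      ((by exact (continuous_const.mul continuous_id).intervalIntegrable s₀ 1 :
        IntervalIntegrable (fun s : ℝ => (c - a) * s) volume s₀ 1))]
    rw [intervalIntegral.integral_const_mul, integral_id, intervalIntegral.integral_const]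
    simp [smul_eq_mul]; ring
  have hkk : k = c / (c - a) := by field_simp; linarith [hk]
  rw [← hsplit, h1, h2, h3, hkk, hs₀def]
  field_simp
  ring


lemma edgeMean_affine (P Q g : Fin 2 → ℝ) (b : ℝ) :
    edgeMean P Q (fun x => dot g x + b) = (dot g P + dot g Q) / 2 + b := by
  unfold edgeMean
  have h : ∀ s : ℝ, dot g (P + s • (Q - P)) + b
      = (dot g P + b) + (dot g Q - dot g P) * s := by
    intro s; simp [dot]; ring
  simp only [h]
  rw [integral_linear]
  ring

lemma edgeMean_w (n D P Q : Fin 2 → ℝ) :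
    edgeMean P Q (fun x => max (dot n (x - D)) 0)
      = ∫ s in (0:ℝ)..1, max (dot n (P - D) + s * (dot n (Q - D) - dot n (P - D))) 0 := by
  unfold edgeMean
  apply intervalIntegral.integral_congr
  intro s _
  have h : dot n (P + s • (Q - P) - D)
      = dot n (P - D) + s * (dot n (Q - D) - dot n (P - D)) := by
    simp [dot]; ring
  show max (dot n (P + s • (Q - P) - D)) 0 = _
  rw [h]

lemma triangle_mem {P Q R : Fin 2 → ℝ} {l1 l2 l3 : ℝ} (h1 : 0 ≤ l1) (h2 : 0 ≤ l2)
    (h3 : 0 ≤ l3) (hs : l1 + l2 + l3 = 1) :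
    l1 • P + l2 • Q + l3 • R ∈ convexHull ℝ ({P, Q, R} : Set (Fin 2 → ℝ)) := by
  have hc := convex_convexHull ℝ ({P, Q, R} : Set (Fin 2 → ℝ))
  have := hc.sum_mem (t := (Finset.univ : Finset (Fin 3))) (w := ![l1, l2, l3])
    (z := ![P, Q, R]) ?_ ?_ ?_
  · simpa [Fin.sum_univ_three] using this
  · intro i _; fin_cases i <;> simpa
  · simp [Fin.sum_univ_three]; exact hs
  · intro i _; fin_cases i <;> exact subset_convexHull _ _ (by simp)

lemma triangle_coeffs {P Q R x : Fin 2 → ℝ}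
    (hx : x ∈ convexHull ℝ ({P, Q, R} : Set (Fin 2 → ℝ))) :
    ∃ l1 l2 l3 : ℝ, 0 ≤ l1 ∧ 0 ≤ l2 ∧ 0 ≤ l3 ∧ l1 + l2 + l3 = 1 ∧
      x = l1 • P + l2 • Q + l3 • R := by
  rw [show ({P, Q, R} : Set (Fin 2 → ℝ)) = insert P {Q, R} from rfl,
    convexHull_insert ⟨Q, Or.inl rfl⟩] at hx
  rw [convexHull_pair, mem_convexJoin] at hx
  obtain ⟨p, hp, z, hz, hxz⟩ := hx
  rw [Set.mem_singleton_iff] at hp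
  subst hp
  obtain ⟨a', b', ha', hb', hab', hz'⟩ := hz
  obtain ⟨t1, t2, ht1, ht2, ht12, hxx⟩ := hxz
  refine ⟨t1, t2 * a', t2 * b', ht1, mul_nonneg ht2 ha', mul_nonneg ht2 hb',
    by nlinarith, ?_⟩
  rw [← hxx, ← hz']
  module

lemma halfplane_convex (n D : Fin 2 → ℝ) :
    Convex ℝ {x : Fin 2 → ℝ | 0 ≤ dot n (x - D)} := by
  intro x hx y hy a b ha hb hab
  simp only [Set.mem_setOf_eq] at *
  have h : dot n (a • x + b • y - D) = a * dot n (x - D) + b * dot n (y - D) := by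
    simp only [dot, Pi.add_apply, Pi.sub_apply, Pi.smul_apply, smul_eq_mul]
    linear_combination (n 0 * D 0 + n 1 * D 1) * hab
  rw [h]
  exact add_nonneg (mul_nonneg ha hx) (mul_nonneg hb hy)


lemma tplus_eq (A₁ A₂ A₃ D E n : Fin 2 → ℝ) (ad d ae e : ℝ)
    (had : 0 < ad) (hd : 0 < d) (hd1 : ad + d = 1)
    (hae : 0 < ae) (he : 0 < e) (he1 : ae + e = 1)
    (hD : ad • A₂ + d • A₃ = D) (hE : ae • A₁ + e • A₃ = E)
    (horth : dot n (E - D) = 0) (hpos : 0 < dot n (A₃ - D)) :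
    convexHull ℝ ({A₁, A₂, A₃} : Set (Fin 2 → ℝ)) ∩ {x | 0 ≤ dot n (x - D)}
      = convexHull ℝ ({E, D, A₃} : Set (Fin 2 → ℝ)) := by
  have hED : E - D = ae • (A₁ - D) + e • (A₃ - D) := by
    rw [← hE]; match_scalars <;> linarith
  have hr1 : ae * dot n (A₁ - D) + e * dot n (A₃ - D) = 0 := by
    rw [hED, dot_add_right, dot_smul_right, dot_smul_right] at horth; linarith
  have hr2 : ad * dot n (A₂ - D) + d * dot n (A₃ - D) = 0 := by
    have h0 : ad • (A₂ - D) + d • (A₃ - D) = (ad • A₂ + d • A₃) - (ad + d) • D := by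
      module
    have h00 : ad • (A₂ - D) + d • (A₃ - D) = (0 : Fin 2 → ℝ) := by
      rw [h0, hD, hd1, one_smul, sub_self]
    have h2 := congrArg (dot n) h00
    rwa [dot_add_right, dot_smul_right, dot_smul_right, dot_zero_right] at h2
  apply Set.Subset.antisymm
  · rintro x ⟨hxT, hxH⟩
    obtain ⟨l1, l2, l3, hl1, hl2, hl3, hls, hx⟩ := triangle_coeffs hxT
    have hxD : x - D = l1 • (A₁ - D) + l2 • (A₂ - D) + l3 • (A₃ - D) := by
      rw [hx]; match_scalars <;> linarith
    have hxval : dot n (x - D)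
        = l1 * dot n (A₁ - D) + l2 * dot n (A₂ - D) + l3 * dot n (A₃ - D) := by
      rw [hxD, dot_add_right, dot_add_right, dot_smul_right, dot_smul_right,
        dot_smul_right]
    have hq1 : ae * (l1 / ae) = l1 := by field_simp
    have hq2 : ad * (l2 / ad) = l2 := by field_simp
    have hμ3eq : dot n (A₃ - D) * (1 - l1 / ae - l2 / ad) = dot n (x - D) := by
      rw [hxval]
      linear_combination (-(l1 / ae)) * hr1 + (-(l2 / ad)) * hr2
        + (dot n (A₁ - D) - dot n (A₃ - D)) * hq1
        + (dot n (A₂ - D) - dot n (A₃ - D)) * hq2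
        + dot n (A₃ - D) * (l1 / ae) * he1 + dot n (A₃ - D) * (l2 / ad) * hd1
        - dot n (A₃ - D) * hls
    have hμ3 : 0 ≤ 1 - l1 / ae - l2 / ad := by
      by_contra hcon
      push_neg at hcon
      rw [Set.mem_setOf_eq] at hxH
      nlinarith [hμ3eq, hxH, hpos]
    have hxrep : x = (l1 / ae) • E + (l2 / ad) • D + (1 - l1 / ae - l2 / ad) • A₃ := by
      rw [hx, ← hE, ← hD]
      match_scalars
      · linear_combination -hq1
      · linear_combination -hq2
      · linear_combination hls + hq1 + hq2 - (l1 / ae) * he1 - (l2 / ad) * hd1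
    rw [hxrep]
    exact triangle_mem (div_nonneg hl1 hae.le) (div_nonneg hl2 had.le) hμ3 (by ring)
  · apply convexHull_min
    · intro y hy
      have hT3 : A₃ ∈ convexHull ℝ ({A₁, A₂, A₃} : Set (Fin 2 → ℝ)) :=
        subset_convexHull _ _ (by simp)
      rcases hy with rfl | rfl | rfl
      · constructor
        · have : y = ae • A₁ + (0:ℝ) • A₂ + e • A₃ := by rw [← hE]; module
          rw [this]
          exact triangle_mem hae.le le_rfl he.le (by linarith)
        · rw [Set.mem_setOf_eq, horth]
      · constructor
        · have : y = (0:ℝ) • A₁ + ad • A₂ + d • A₃ := by rw [← hD]; module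
          rw [this]
          exact triangle_mem le_rfl had.le hd.le (by linarith)
        · rw [Set.mem_setOf_eq, sub_self, dot_zero_right]
      · exact ⟨hT3, hpos.le⟩
    · exact (convex_convexHull ℝ _).inter (halfplane_convex n D)


def stdTri : Set (Fin 2 → ℝ) :=
  convexHull ℝ ({![(1:ℝ), 0], ![(0:ℝ), 1], ![(0:ℝ), 0]} : Set (Fin 2 → ℝ))

lemma stdTri_vol_pos : 0 < volume stdTri := by
  have hsub : Set.pi Set.univ (fun _ : Fin 2 => Set.Ioo (0:ℝ) (1/3)) ⊆ stdTri := by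
    intro x hx
    rw [Set.mem_pi] at hx
    have h0 := hx 0 (Set.mem_univ _)
    have h1 := hx 1 (Set.mem_univ _)
    have hxe : x = x 0 • ![(1:ℝ), 0] + x 1 • ![(0:ℝ), 1]
        + (1 - x 0 - x 1) • ![(0:ℝ), 0] := by
      funext i
      fin_cases i <;> simp
    rw [hxe]
    exact triangle_mem h0.1.le h1.1.le (by nlinarith [h0.2, h1.2]) (by ring)
  have hbox : (0:ENNReal) < volume (Set.pi Set.univ fun _ : Fin 2 => Set.Ioo (0:ℝ) (1/3)) := by
    rw [volume_pi_pi]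
    simp only [Real.volume_Ioo, Fin.prod_univ_two]
    norm_num
  exact lt_of_lt_of_le hbox (measure_mono hsub)

lemma stdTri_vol_lt_top : volume stdTri < ⊤ := by
  have hsub : stdTri ⊆ Set.pi Set.univ (fun _ : Fin 2 => Set.Icc (0:ℝ) 1) := by
    apply convexHull_min
    · intro y hy
      rcases hy with rfl | rfl | rfl <;>
        · rw [Set.mem_pi]; intro i _; fin_cases i <;> simp <;> norm_num
    · exact convex_pi fun i _ => convex_Icc 0 1
  refine lt_of_le_of_lt (measure_mono hsub) ?_
  rw [volume_pi_pi]
  simp [Real.volume_Icc]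

lemma volume_triangle (P₁ P₂ P₃ : Fin 2 → ℝ) :
    volume (convexHull ℝ ({P₁, P₂, P₃} : Set (Fin 2 → ℝ))) =
      ENNReal.ofReal |(P₁ 0 - P₃ 0) * (P₂ 1 - P₃ 1) - (P₂ 0 - P₃ 0) * (P₁ 1 - P₃ 1)|
        * volume stdTri := by
  set B : Matrix (Fin 2) (Fin 2) ℝ :=
    !![P₁ 0 - P₃ 0, P₂ 0 - P₃ 0; P₁ 1 - P₃ 1, P₂ 1 - P₃ 1] with hB
  set L := Matrix.toLin' B with hL
  let f : (Fin 2 → ℝ) →ᵃ[ℝ] (Fin 2 → ℝ) :=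
    { toFun := fun x => P₃ + L x
      linear := L
      map_vadd' := by
        intro p v
        show P₃ + L (v + p) = L v + (P₃ + L p)
        rw [map_add]; abel }
  have himg : convexHull ℝ ({P₁, P₂, P₃} : Set (Fin 2 → ℝ)) = (fun x => P₃ + L x) '' stdTri := by
    have h1 : (fun x => P₃ + L x) '' stdTri = f '' stdTri := rfl
    rw [h1, stdTri, AffineMap.image_convexHull]
    congr 1
    have e1 : f ![(1:ℝ), 0] = P₁ := by
      funext i
      fin_cases i <;>
        · simp [f, hL, Matrix.toLin'_apply, Matrix.mulVec, dotProduct,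
            Fin.sum_univ_two, hB, Matrix.vecHead, Matrix.vecTail, Function.comp]
          try ring
    have e2 : f ![(0:ℝ), 1] = P₂ := by
      funext i
      fin_cases i <;>
        · simp [f, hL, Matrix.toLin'_apply, Matrix.mulVec, dotProduct,
            Fin.sum_univ_two, hB, Matrix.vecHead, Matrix.vecTail, Function.comp]
          try ring
    have e3 : f ![(0:ℝ), 0] = P₃ := by
      funext i
      fin_cases i <;>
        · simp [f, hL, Matrix.toLin'_apply, Matrix.mulVec, dotProduct,
            Fin.sum_univ_two, hB, Matrix.vecHead, Matrix.vecTail, Function.comp]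
          try ring
    rw [Set.image_insert_eq, Set.image_insert_eq, Set.image_singleton, e1, e2, e3]
  rw [himg]
  have hcomp : (fun x => P₃ + L x) '' stdTri = (fun y => P₃ + y) '' (L '' stdTri) := by
    rw [← Set.image_comp]; rfl
  rw [hcomp, Set.image_add_left, measure_preimage_add,
    Measure.addHaar_image_linearMap, hL, LinearMap.det_toLin', hB,
    Matrix.det_fin_two_of]

lemma det_ne_zero_of_affineIndependent {A₁ A₂ A₃ : Fin 2 → ℝ}
    (h : AffineIndependent ℝ ![A₁, A₂, A₃]) :
    (A₁ 0 - A₃ 0) * (A₂ 1 - A₃ 1) - (A₁ 1 - A₃ 1) * (A₂ 0 - A₃ 0) ≠ 0 := by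
  intro hω
  rw [affineIndependent_iff_not_collinear_set] at h
  apply h
  rw [collinear_iff_of_mem (show A₃ ∈ ({A₁, A₂, A₃} : Set (Fin 2 → ℝ)) by simp)]
  by_cases hu : A₁ - A₃ = 0
  · refine ⟨A₂ - A₃, ?_⟩
    intro p hp
    rcases hp with hp | hp | hp
    · refine ⟨0, ?_⟩
      rw [hp, zero_smul, zero_vadd]
      exact sub_eq_zero.mp hu
    · refine ⟨1, ?_⟩
      rw [hp, one_smul]
      funext i
      simp
    · exact ⟨0, by rw [hp, zero_smul, zero_vadd]⟩
  · refine ⟨A₁ - A₃, ?_⟩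
    intro p hp
    rcases hp with hp | hp | hp
    · refine ⟨1, ?_⟩
      rw [hp, one_smul]
      funext i
      simp
    · by_cases h0 : A₁ 0 - A₃ 0 = 0
      · have h1 : A₁ 1 - A₃ 1 ≠ 0 := by
          intro h1
          apply hu
          funext i
          fin_cases i
          · simpa using h0
          · simpa using h1
        have h20 : A₂ 0 - A₃ 0 = 0 := by
          rcases mul_eq_zero.mp (show (A₁ 1 - A₃ 1) * (A₂ 0 - A₃ 0) = 0 by
            linear_combination -hω + (A₂ 1 - A₃ 1) * h0) with hc | hc
          · exact absurd hc h1
          · exact hc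
        refine ⟨(A₂ 1 - A₃ 1) / (A₁ 1 - A₃ 1), ?_⟩
        rw [hp]
        funext i
        fin_cases i <;>
          simp only [Pi.vadd_apply, vadd_eq_add, Pi.add_apply, Pi.smul_apply,
            Pi.sub_apply, smul_eq_mul, Fin.zero_eta, Fin.mk_one]
        · rw [h0, mul_zero, zero_add]; linarith
        · rw [div_mul_cancel₀ _ h1]; ring
      · refine ⟨(A₂ 0 - A₃ 0) / (A₁ 0 - A₃ 0), ?_⟩
        rw [hp]
        funext i
        fin_cases i <;>
          simp only [Pi.vadd_apply, vadd_eq_add, Pi.add_apply, Pi.smul_apply,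
            Pi.sub_apply, smul_eq_mul, Fin.zero_eta, Fin.mk_one]
        · rw [div_mul_cancel₀ _ h0]; ring
        · have hkey : A₂ 1 - A₃ 1 = (A₂ 0 - A₃ 0) / (A₁ 0 - A₃ 0) * (A₁ 1 - A₃ 1) := by
            field_simp
            linear_combination hω
          linarith
    · exact ⟨0, by rw [hp, zero_smul, zero_vadd]⟩


lemma final_algebra (g n u v : Fin 2 → ℝ) (K : ℝ)
    (hu : dot g u = K * dot n u) (hv : dot g v = K * dot n v)
    (hn : dot n n = 1)
    (hω : u 0 * v 1 - u 1 * v 0 ≠ 0) :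
    dot g n = K := by
  simp only [dot] at hu hv hn ⊢
  have hg0 : (u 0 * v 1 - u 1 * v 0) * g 0 = (u 0 * v 1 - u 1 * v 0) * (K * n 0) := by
    linear_combination v 1 * hu - u 1 * hv
  have hg1 : (u 0 * v 1 - u 1 * v 0) * g 1 = (u 0 * v 1 - u 1 * v 0) * (K * n 1) := by
    linear_combination u 0 * hv - v 0 * hu
  have e0 := mul_left_cancel₀ hω hg0
  have e1 := mul_left_cancel₀ hω hg1
  rw [e0, e1]
  linear_combination K * hn

/-- if `L = π w` is the Crouzeix–Raviart interpolant (represented by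
`L x = ⟨g, x⟩ + b`) of `w(x) = max(⟨n, x − D⟩, 0)` on an arbitrary cut triangle,
then `⟨∇L, n⟩ = |T⁺| / |T|`. -/
theorem statement3 (c : CutTriangle) (g : Fin 2 → ℝ) (b : ℝ)
    (hL : c.IsCR c.w g b) :
    dot g c.n = area c.Tplus / area c.T := by
  obtain ⟨ad, d, had, hd, hd1, hDeq⟩ := c.hD
  obtain ⟨ae, e, hae, he, he1, hEeq⟩ := c.hE
  obtain ⟨hm1, hm2, hm3⟩ := hL
  have hwdef : c.w = fun x => max (dot c.n (x - c.D)) 0 := rfl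
  rw [hwdef] at hm1 hm2 hm3
  -- basic alpha relations
  have hED : c.E - c.D = ae • (c.A₁ - c.D) + e • (c.A₃ - c.D) := by
    rw [← hEeq]; match_scalars <;> linarith
  have hr1 : ae * dot c.n (c.A₁ - c.D) + e * dot c.n (c.A₃ - c.D) = 0 := by
    have horth := c.hn_orth
    rw [hED, dot_add_right, dot_smul_right, dot_smul_right] at horth; linarith
  have hr2 : ad * dot c.n (c.A₂ - c.D) + d * dot c.n (c.A₃ - c.D) = 0 := by
    have h0 : ad • (c.A₂ - c.D) + d • (c.A₃ - c.D)
        = (ad • c.A₂ + d • c.A₃) - (ad + d) • c.D := by module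
    have h00 : ad • (c.A₂ - c.D) + d • (c.A₃ - c.D) = (0 : Fin 2 → ℝ) := by
      rw [h0, hDeq, hd1, one_smul, sub_self]
    have h2 := congrArg (dot c.n) h00
    rwa [dot_add_right, dot_smul_right, dot_smul_right, dot_zero_right] at h2
  have hα₃ := c.hn_sign
  have hα₁neg : dot c.n (c.A₁ - c.D) < 0 := by nlinarith
  have hα₂neg : dot c.n (c.A₂ - c.D) < 0 := by nlinarith
  have hk1 : ad * (dot c.n (c.A₃ - c.D) - dot c.n (c.A₂ - c.D)) = dot c.n (c.A₃ - c.D) := by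
    linear_combination -hr2 + dot c.n (c.A₃ - c.D) * hd1
  have hk2 : ae * (dot c.n (c.A₃ - c.D) - dot c.n (c.A₁ - c.D)) = dot c.n (c.A₃ - c.D) := by
    linear_combination -hr1 + dot c.n (c.A₃ - c.D) * he1
  -- edge means of w
  have hw1 : edgeMean c.A₂ c.A₃ (fun x => max (dot c.n (x - c.D)) 0)
      = ad * dot c.n (c.A₃ - c.D) / 2 := by
    rw [edgeMean_w]
    exact integral_max_cross hα₂neg hα₃ hk1
  have hw2 : edgeMean c.A₁ c.A₃ (fun x => max (dot c.n (x - c.D)) 0)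
      = ae * dot c.n (c.A₃ - c.D) / 2 := by
    rw [edgeMean_w]
    exact integral_max_cross hα₁neg hα₃ hk2
  have hw3 : edgeMean c.A₁ c.A₂ (fun x => max (dot c.n (x - c.D)) 0) = 0 := by
    rw [edgeMean_w]
    exact integral_max_nonpos hα₁neg.le hα₂neg.le
  rw [edgeMean_affine, hw1] at hm1
  rw [edgeMean_affine, hw2] at hm2
  rw [edgeMean_affine, hw3] at hm3
  -- gradient relations
  have hgu : dot g c.A₃ - dot g c.A₁ = ad * dot c.n (c.A₃ - c.D) := by
    linear_combination 2 * hm1 - 2 * hm3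
  have hgv : dot g c.A₃ - dot g c.A₂ = ae * dot c.n (c.A₃ - c.D) := by
    linear_combination 2 * hm2 - 2 * hm3
  simp only [dot_sub_right] at hgu hgv hk1 hk2
  have hu : dot g (c.A₃ - c.A₁) = (ad * ae) * dot c.n (c.A₃ - c.A₁) := by
    rw [dot_sub_right, dot_sub_right]
    linear_combination hgu - ad * hk2
  have hv : dot g (c.A₃ - c.A₂) = (ad * ae) * dot c.n (c.A₃ - c.A₂) := by
    rw [dot_sub_right, dot_sub_right]
    linear_combination hgv - ae * hk1
  have hdet := det_ne_zero_of_affineIndependent c.indep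
  have hω : (c.A₃ - c.A₁) 0 * (c.A₃ - c.A₂) 1 - (c.A₃ - c.A₁) 1 * (c.A₃ - c.A₂) 0 ≠ 0 := by
    simp only [Pi.sub_apply]
    intro hcon
    exact hdet (by linear_combination hcon)
  have hdotgn : dot g c.n = ad * ae :=
    final_algebra g c.n (c.A₃ - c.A₁) (c.A₃ - c.A₂) (ad * ae) hu hv c.hn_unit hω
  -- areas
  have hTp : c.Tplus = convexHull ℝ ({c.E, c.D, c.A₃} : Set (Fin 2 → ℝ)) :=
    tplus_eq c.A₁ c.A₂ c.A₃ c.D c.E c.n ad d ae e had hd hd1 hae he he1 hDeq hEeq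
      c.hn_orth c.hn_sign
  have hVT : volume c.T = ENNReal.ofReal
      |(c.A₁ 0 - c.A₃ 0) * (c.A₂ 1 - c.A₃ 1) - (c.A₂ 0 - c.A₃ 0) * (c.A₁ 1 - c.A₃ 1)|
        * volume stdTri := volume_triangle c.A₁ c.A₂ c.A₃
  have hVP : volume c.Tplus = ENNReal.ofReal
      |(c.E 0 - c.A₃ 0) * (c.D 1 - c.A₃ 1) - (c.D 0 - c.A₃ 0) * (c.E 1 - c.A₃ 1)|
        * volume stdTri := by
    rw [hTp]; exact volume_triangle c.E c.D c.A₃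
  have hE0 := congrFun hEeq 0
  have hE1 := congrFun hEeq 1
  have hD0 := congrFun hDeq 0
  have hD1 := congrFun hDeq 1
  simp only [Pi.add_apply, Pi.smul_apply, smul_eq_mul] at hE0 hE1 hD0 hD1
  have hdet2 : (c.E 0 - c.A₃ 0) * (c.D 1 - c.A₃ 1) - (c.D 0 - c.A₃ 0) * (c.E 1 - c.A₃ 1)
      = (ae * ad) * ((c.A₁ 0 - c.A₃ 0) * (c.A₂ 1 - c.A₃ 1)
        - (c.A₂ 0 - c.A₃ 0) * (c.A₁ 1 - c.A₃ 1)) := by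
    have hu0 : c.E 0 - c.A₃ 0 = ae * (c.A₁ 0 - c.A₃ 0) := by
      linear_combination -hE0 + c.A₃ 0 * he1
    have hu1 : c.E 1 - c.A₃ 1 = ae * (c.A₁ 1 - c.A₃ 1) := by
      linear_combination -hE1 + c.A₃ 1 * he1
    have hv0 : c.D 0 - c.A₃ 0 = ad * (c.A₂ 0 - c.A₃ 0) := by
      linear_combination -hD0 + c.A₃ 0 * hd1
    have hv1 : c.D 1 - c.A₃ 1 = ad * (c.A₂ 1 - c.A₃ 1) := by
      linear_combination -hD1 + c.A₃ 1 * hd1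
    rw [hu0, hu1, hv0, hv1]; ring
  have hωne : (c.A₁ 0 - c.A₃ 0) * (c.A₂ 1 - c.A₃ 1)
      - (c.A₂ 0 - c.A₃ 0) * (c.A₁ 1 - c.A₃ 1) ≠ 0 := by
    intro hcon
    exact hdet (by linear_combination hcon)
  have hvr : (volume stdTri).toReal ≠ 0 :=
    (ENNReal.toReal_pos stdTri_vol_pos.ne' stdTri_vol_lt_top.ne).ne'
  have hAT : area c.T
      = |(c.A₁ 0 - c.A₃ 0) * (c.A₂ 1 - c.A₃ 1) - (c.A₂ 0 - c.A₃ 0) * (c.A₁ 1 - c.A₃ 1)|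
        * (volume stdTri).toReal := by
    show (volume c.T).toReal = _
    rw [hVT, ENNReal.toReal_mul, ENNReal.toReal_ofReal (abs_nonneg _)]
  have hAP : area c.Tplus
      = (ae * ad) * (|(c.A₁ 0 - c.A₃ 0) * (c.A₂ 1 - c.A₃ 1)
        - (c.A₂ 0 - c.A₃ 0) * (c.A₁ 1 - c.A₃ 1)| * (volume stdTri).toReal) := by
    show (volume c.Tplus).toReal = _
    rw [hVP, hdet2, ENNReal.toReal_mul, ENNReal.toReal_ofReal (abs_nonneg _),
      abs_mul, abs_of_pos (mul_pos hae had)]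
    ring
  have hX : |(c.A₁ 0 - c.A₃ 0) * (c.A₂ 1 - c.A₃ 1)
      - (c.A₂ 0 - c.A₃ 0) * (c.A₁ 1 - c.A₃ 1)| * (volume stdTri).toReal ≠ 0 :=
    mul_ne_zero (abs_ne_zero.mpr hωne) hvr
  rw [hAP, hAT, hdotgn, mul_div_assoc, div_self hX, mul_one, mul_comm]


end StokesIFE
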